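/- Let T be a right R-module with S = End(T_R). If X is a right R-module lying in cogen*(T) — i.e., there is an exact sequence 0 → X → T^0 → T^1 → ⋯ with each T^i ∈ add(T) and Ext^1_R(coker, T) = 0 at each stage — then the natural evaluation map π_X : X → Hom_S(Hom_R(X,T), T) is an isomorphism. -/

import Mathlib

noncomputable section
open CategoryTheory

universe u

/-- Vanishing of `Ext^i_A(M, N)` for `A`-modules `M`, `N`. -/
def extVanish (A : Type u) [Ring A] (i : ℕ) (M N : Type u) [AddCommGroup M] [Module A M]
    [AddCommGroup N] [Module A N] : Prop :=
  Subsingleton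
    (((Ext ℤ (ModuleCat.{u} A) i).obj (Opposite.op (ModuleCat.of A M))).obj (ModuleCat.of A N))

/-- `M` is a direct summand of a finite direct sum of copies of `T`, i.e. `M ∈ add T`. -/
def InAdd (A : Type u) [Ring A] (T : Type u) [AddCommGroup T] [Module A T]
    (M : Type u) [AddCommGroup M] [Module A M] : Prop :=
  ∃ (n : ℕ) (ι : M →ₗ[A] (Fin n → T)) (π : (Fin n → T) →ₗ[A] M), π ∘ₗ ι = LinearMap.id

/-- `X ∈ cogen*(T)`: there is an exact coresolution `0 → X → T⁰ → T¹ → ⋯` with each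
`Tⁱ ∈ add T` and `Ext¹(coker, T) = 0` at every stage. -/
def InCogenStar (A : Type u) [Ring A] (T : Type u) [AddCommGroup T] [Module A T]
    (X : Type u) [AddCommGroup X] [Module A X] : Prop :=
  ∃ (C : ℕ → ModuleCat.{u} A) (f : X →ₗ[A] C 0) (d : ∀ n, C n →ₗ[A] C (n + 1)),
    (∀ n, InAdd A T (C n)) ∧
    Function.Injective f ∧
    Function.Exact f (d 0) ∧
    (∀ n, Function.Exact (d n) (d (n + 1))) ∧
    extVanish A 1 ((C 0) ⧸ LinearMap.range f) T ∧
    (∀ n, extVanish A 1 ((C (n + 1)) ⧸ LinearMap.range (d n)) T)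

/-- The natural evaluation map `π_X : X → Hom_S(Hom_A(X,T), T)`, `x ↦ (g ↦ g x)`, where
`S = End(T)`. -/
def evalMap (A : Type u) [Ring A] (T : Type u) [AddCommGroup T] [Module A T]
    (X : Type u) [AddCommGroup X] [Module A X] (x : X) :
    (X →ₗ[A] T) →ₗ[Module.End A T] T where
  toFun g := g x
  map_add' g h := rfl
  map_smul' s g := rfl

section Aux

variable {A : Type u} [Ring A] {T X C : Type u} [AddCommGroup T] [Module A T]
  [AddCommGroup X] [Module A X] [AddCommGroup C] [Module A C]

theorem lift_of_extVanish (f : X →ₗ[A] C) (hf : Function.Injective f)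
    (hext : extVanish A 1 (C ⧸ LinearMap.range f) T) (g : X →ₗ[A] T) :
    ∃ g' : C →ₗ[A] T, g' ∘ₗ f = g := by
  classical
  set Y : ModuleCat.{u} A := ModuleCat.of A (C ⧸ LinearMap.range f)
  obtain ⟨P⟩ := (inferInstance : HasProjectiveResolution Y).out
  set K := P.complex.linearYonedaObj ℤ (ModuleCat.of A T) with hK
  have hsub : Subsingleton (K.homology 1 : Type u) := by
    have e := P.isoExt (R := ℤ) 1 (ModuleCat.of A T)
    have h1 : Subsingleton (((Ext ℤ (ModuleCat.{u} A) 1).obj (Opposite.op Y)).obj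
        (ModuleCat.of A T) : Type u) := hext
    exact Equiv.subsingleton ((forget _).mapIso e).toEquiv.symm
  have hz : Limits.IsZero (K.homology 1) := ModuleCat.isZero_of_subsingleton _
  have hex : K.ExactAt 1 := (HomologicalComplex.exactAt_iff_isZero_homology _ _).2 hz
  have hex' := (HomologicalComplex.exactAt_iff' K 0 1 2 (by simp) (by simp)).1 hex
  rw [ShortComplex.moduleCat_exact_iff] at hex'
  -- notation
  set q : C →ₗ[A] Y := (LinearMap.range f).mkQ with hq
  have hqsurj : Function.Surjective q := Submodule.mkQ_surjective _
  have hqf : ∀ x, q (f x) = 0 := by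
    intro x
    exact (Submodule.Quotient.mk_eq_zero _).2 ⟨x, rfl⟩
  haveI : Epi (ModuleCat.ofHom q) := (ModuleCat.epi_iff_surjective _).2 hqsurj
  set ε : P.complex.X 0 ⟶ Y := P.π.f 0 with hε
  set α : P.complex.X 0 ⟶ ModuleCat.of A C := Projective.factorThru ε (ModuleCat.ofHom q) with hα
  have hαq : ∀ p, q (α p) = ε p := by
    intro p
    have := Projective.factorThru_comp ε (ModuleCat.ofHom q)
    exact congrFun (congrArg (fun (h : _ ⟶ _) => (h : _ → _)) this) p
  -- exactness at 0 of the resolution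
  have hexact0 : (ShortComplex.mk (P.complex.d 1 0) ε P.complex_d_comp_π_f_zero).Exact :=
    ShortComplex.exact_of_g_is_cokernel _ P.isColimitCokernelCofork
  rw [ShortComplex.moduleCat_exact_iff] at hexact0
  have hεsurj : Function.Surjective ε := by
    rw [← ModuleCat.epi_iff_surjective]; exact (inferInstance : Epi (P.π.f 0))
  -- construct β
  set e := LinearEquiv.ofInjective f hf with he
  have hmem : ∀ p, α (P.complex.d 1 0 p) ∈ LinearMap.range f := by
    intro p
    have h0 : ε (P.complex.d 1 0 p) = 0 := by
      have := P.complex_d_comp_π_f_zero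
      exact congrFun (congrArg (fun (h : _ ⟶ _) => (h : _ → _)) this) p
    have : α (P.complex.d 1 0 p) ∈ LinearMap.ker q :=
      LinearMap.mem_ker.mpr ((hαq _).trans h0)
    rwa [hq, Submodule.ker_mkQ] at this
  set β : P.complex.X 1 →ₗ[A] X :=
    e.symm.toLinearMap ∘ₗ
      LinearMap.codRestrict (LinearMap.range f)
        ((α.hom : P.complex.X 0 →ₗ[A] C) ∘ₗ ((P.complex.d 1 0).hom : P.complex.X 1 →ₗ[A] P.complex.X 0))
        hmem with hβ
  have hfβ : ∀ p, f (β p) = α (P.complex.d 1 0 p) := by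
    intro p
    have : (e (β p) : C) = α (P.complex.d 1 0 p) := by
      simp only [hβ, LinearMap.coe_comp, LinearEquiv.coe_coe, Function.comp_apply,
        LinearEquiv.apply_symm_apply, LinearMap.codRestrict_apply]
    rwa [he, LinearEquiv.ofInjective_apply] at this
  set αl : P.complex.X 0 →ₗ[A] C := (α.hom : P.complex.X 0 →ₗ[A] C) with hαl
  have hαlq : ∀ p, q (αl p) = ε p := hαq
  have hfβ' : ∀ p, f (β p) = αl (P.complex.d 1 0 p) := hfβ
  have hdd : ∀ p, P.complex.d 1 0 (P.complex.d 2 1 p) = 0 := by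
    intro p
    have h3 := P.complex.d_comp_d 2 1 0
    calc P.complex.d 1 0 (P.complex.d 2 1 p)
        = (P.complex.d 2 1 ≫ P.complex.d 1 0) p := rfl
      _ = (0 : P.complex.X 2 ⟶ P.complex.X 0) p := by rw [h3]
      _ = 0 := rfl
  have hβd : ∀ p, β (P.complex.d 2 1 p) = 0 := by
    intro p
    apply hf
    rw [hfβ', hdd, map_zero, map_zero]
  -- the cocycle
  set u : P.complex.X 1 ⟶ ModuleCat.of A T := ModuleCat.ofHom (g ∘ₗ β) with hu
  have hcocycle : (HomologicalComplex.sc' K 0 1 2).g u = 0 := by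
    show P.complex.d 2 1 ≫ u = (0 : P.complex.X 2 ⟶ ModuleCat.of A T)
    apply ModuleCat.hom_ext
    apply LinearMap.ext
    intro p
    show g (β (P.complex.d 2 1 p)) = 0
    rw [hβd, map_zero]
  obtain ⟨h, hh⟩ := hex' u hcocycle
  have hh' : (P.complex.d 1 0 ≫ (h : P.complex.X 0 ⟶ ModuleCat.of A T)) = u := hh
  set hl : P.complex.X 0 →ₗ[A] T := ((h : P.complex.X 0 ⟶ ModuleCat.of A T).hom :
    P.complex.X 0 →ₗ[A] T) with hhl
  have hhd : ∀ p, hl (P.complex.d 1 0 p) = g (β p) := by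
    intro p
    exact DFunLike.congr_fun (congrArg ModuleCat.Hom.hom hh') p
  -- the pushout-style factorization
  set Φ : (P.complex.X 0 × X) →ₗ[A] C := LinearMap.coprod αl f with hΦdef
  have hΦsurj : Function.Surjective Φ := by
    intro c
    obtain ⟨p, hp⟩ := hεsurj (q c)
    have hmem2 : c - αl p ∈ LinearMap.range f := by
      have h4 : q (c - αl p) = 0 := by rw [map_sub, hαlq, hp, sub_self]
      have h5 : c - αl p ∈ LinearMap.ker q := LinearMap.mem_ker.mpr h4
      rwa [hq, Submodule.ker_mkQ] at h5
    obtain ⟨x, hx⟩ := hmem2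
    refine ⟨(p, x), ?_⟩
    show αl p + f x = c
    rw [hx]
    abel
  set G : (P.complex.X 0 × X) →ₗ[A] T := LinearMap.coprod hl g with hGdef
  have hker : LinearMap.ker Φ ≤ LinearMap.ker G := by
    rintro ⟨p, x⟩ hz0
    have hΦz : αl p + f x = 0 := LinearMap.mem_ker.mp hz0
    have hεp : ε p = 0 := by
      have h4 : q (αl p + f x) = 0 := by rw [hΦz, map_zero]
      rw [map_add, hαlq, hqf, add_zero] at h4
      exact h4
    obtain ⟨p1, hp1⟩ := hexact0 p hεp
    have hp1' : P.complex.d 1 0 (p1 : P.complex.X 1) = p := hp1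
    have hx : x = -β p1 := by
      apply hf
      rw [map_neg, hfβ', hp1']
      exact eq_neg_of_add_eq_zero_right hΦz
    have hGz : G (p, x) = 0 := by
      have h6 : G (p, x) = hl p + g x := rfl
      rw [h6, hx, ← hp1', hhd, map_neg, add_neg_cancel]
    exact LinearMap.mem_ker.mpr hGz
  set ebar := Φ.quotKerEquivOfSurjective hΦsurj with hebar
  set g' : C →ₗ[A] T :=
    ((LinearMap.ker Φ).liftQ G hker) ∘ₗ ebar.symm.toLinearMap with hg'
  have key : ∀ z, g' (Φ z) = G z := by
    intro z
    have h1 : ebar ((LinearMap.ker Φ).mkQ z) = Φ z := by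
      simp [hebar, LinearMap.quotKerEquivOfSurjective, LinearMap.quotKerEquivRange_apply_mk]
    have h2 : ebar.symm (Φ z) = (LinearMap.ker Φ).mkQ z := by
      rw [← h1, LinearEquiv.symm_apply_apply]
    simp [hg', h2]
  refine ⟨g', ?_⟩
  ext x
  have h7 : f x = Φ (0, x) := by
    show f x = αl 0 + f x
    rw [map_zero, zero_add]
  show g' (f x) = g x
  rw [h7, key]
  show hl 0 + g x = g x
  rw [map_zero, zero_add]

variable {A : Type u} [Ring A] {T : Type u} [AddCommGroup T] [Module A T]

/-- Dualizing a linear map, as an `End`-linear map between `Hom(-,T)`s. -/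
def dmap {M N : Type u} [AddCommGroup M] [Module A M] [AddCommGroup N] [Module A N]
    (h : M →ₗ[A] N) : (N →ₗ[A] T) →ₗ[Module.End A T] (M →ₗ[A] T) where
  toFun g := g ∘ₗ h
  map_add' g1 g2 := LinearMap.add_comp _ _ _
  map_smul' s g := by ext m; rfl

theorem evalMap_naturality {M N : Type u} [AddCommGroup M] [Module A M] [AddCommGroup N]
    [Module A N] (h : M →ₗ[A] N) (x : M) :
    evalMap A T N (h x) = (evalMap A T M x) ∘ₗ (dmap h) := by
  ext g; rfl

theorem evalMap_pi_bijective (n : ℕ) :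
    Function.Bijective (evalMap A T (Fin n → T)) := by
  constructor
  · intro x y hxy
    funext i
    have := DFunLike.congr_fun hxy (LinearMap.proj i : (Fin n → T) →ₗ[A] T)
    exact this
  · intro φ
    refine ⟨fun i => φ (LinearMap.proj i), ?_⟩
    ext g
    show g (fun i => φ (LinearMap.proj i)) = φ g
    have hg : g = ∑ i : Fin n, ((g ∘ₗ LinearMap.single A (fun _ => T) i : Module.End A T) •
        (LinearMap.proj i : (Fin n → T) →ₗ[A] T)) := by
      apply LinearMap.ext
      intro y
      rw [LinearMap.sum_apply]
      have hterm : ∀ i : Fin n, ((g ∘ₗ LinearMap.single A (fun _ => T) i : Module.End A T) •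
          (LinearMap.proj i : (Fin n → T) →ₗ[A] T)) y = g (Pi.single i (y i)) := fun i => rfl
      simp_rw [hterm]
      rw [← map_sum, Finset.univ_sum_single]
    conv_rhs => rw [hg]
    rw [map_sum]
    have : ∀ i : Fin n, φ ((g ∘ₗ LinearMap.single A (fun _ => T) i : Module.End A T) •
        (LinearMap.proj i : (Fin n → T) →ₗ[A] T)) = g (Pi.single i (φ (LinearMap.proj i))) := by
      intro i
      rw [map_smul]
      rfl
    simp_rw [this]
    rw [← map_sum, Finset.univ_sum_single]

theorem evalMap_bijective_of_inAdd {M : Type u} [AddCommGroup M] [Module A M]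
    (h : InAdd A T M) : Function.Bijective (evalMap A T M) := by
  obtain ⟨n, ι, p, hp⟩ := h
  have hpi : ∀ m : M, p (ι m) = m := fun m => DFunLike.congr_fun hp m
  obtain ⟨hinj, hsurj⟩ := evalMap_pi_bijective (A := A) (T := T) n
  constructor
  · intro x y hxy
    have h1 : evalMap A T (Fin n → T) (ι x) = evalMap A T (Fin n → T) (ι y) := by
      rw [evalMap_naturality ι x, evalMap_naturality ι y, hxy]
    have := hinj h1
    have := congrArg p this
    rwa [hpi, hpi] at this
  · intro φ
    obtain ⟨z, hz⟩ := hsurj (φ ∘ₗ dmap ι)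
    refine ⟨p z, ?_⟩
    ext g
    show g (p z) = φ g
    have h2 := DFunLike.congr_fun hz (g ∘ₗ p)
    show (evalMap A T (Fin n → T) z) (g ∘ₗ p) = φ g
    rw [h2]
    show φ ((g ∘ₗ p) ∘ₗ ι) = φ g
    congr 1
    rw [LinearMap.comp_assoc, hp, LinearMap.comp_id]


end Aux

/-- Let `T` be a right `R`-module with `S = End(T_R)`.  If `X ∈ cogen*(T)`,
then the natural evaluation map `π_X : X → Hom_S(Hom_R(X,T), T)` is an isomorphism. -/
theorem evalMap_bijective_of_mem_cogenStar (R : Type u) [Ring R]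
    (T : Type u) [AddCommGroup T] [Module Rᵐᵒᵖ T]
    (X : Type u) [AddCommGroup X] [Module Rᵐᵒᵖ X]
    (hX : InCogenStar Rᵐᵒᵖ T X) :
    Function.Bijective (evalMap Rᵐᵒᵖ T X) := by
  classical
  obtain ⟨C, f, d, hadd, hfinj, hex0, _hexn, hv0, _hvn⟩ := hX
  have h0 := evalMap_bijective_of_inAdd (hadd 0)
  have h1 := evalMap_bijective_of_inAdd (hadd 1)
  have hd0f : ∀ x, d 0 (f x) = 0 := fun x => hex0.apply_apply_eq_zero x
  constructor
  · intro x y hxy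
    apply hfinj
    apply h0.1
    rw [evalMap_naturality f x, evalMap_naturality f y, hxy]
  · intro φ
    set ψ : (↑(C 0) →ₗ[Rᵐᵒᵖ] T) →ₗ[Module.End Rᵐᵒᵖ T] T := φ ∘ₗ dmap f with hψ
    obtain ⟨c, hc⟩ := h0.2 ψ
    have hdc : d 0 c = 0 := by
      apply h1.1
      apply LinearMap.ext
      intro g
      show g (d 0 c) = (evalMap Rᵐᵒᵖ T (↑(C 1)) 0) g
      have hz : (evalMap Rᵐᵒᵖ T (↑(C 1)) 0) g = g 0 := rfl
      rw [hz, map_zero]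
      calc g (d 0 c) = (evalMap Rᵐᵒᵖ T (↑(C 0)) c) (g ∘ₗ d 0) := rfl
        _ = ψ (g ∘ₗ d 0) := by rw [hc]
        _ = φ ((g ∘ₗ d 0) ∘ₗ f) := rfl
        _ = φ 0 := by
            congr 1
            apply LinearMap.ext
            intro x
            show g (d 0 (f x)) = 0
            rw [hd0f, map_zero]
        _ = 0 := map_zero φ
    obtain ⟨x, hx⟩ : c ∈ Set.range f := (hex0 c).mp hdc
    refine ⟨x, ?_⟩
    apply LinearMap.ext
    intro g
    obtain ⟨g', hg'⟩ := lift_of_extVanish f hfinj hv0 g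
    show g x = φ g
    calc g x = (g' ∘ₗ f) x := by rw [hg']
      _ = g' (f x) := rfl
      _ = g' c := by rw [hx]
      _ = (evalMap Rᵐᵒᵖ T (↑(C 0)) c) g' := rfl
      _ = ψ g' := by rw [hc]
      _ = φ (g' ∘ₗ f) := rfl
      _ = φ g := by rw [hg']

end
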